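/- arXiv:1107.5368 — 3 statements merged into one kernel-verified Lean document; each statement's English description precedes it below -/
import Mathlib

section
/- Let (X, μ) be a probability space and T : X → X an invertible measure-preserving transformation. Then for every measurable set A ⊆ X with μ(A) > 0, the lim inf as N → ∞ of (1/N) · Σ_{i=1}^{N} μ(A ∩ T^{-i}A ∩ T^{-2i}A) is strictly positive. -/
open MeasureTheory Filter
open scoped ENNReal


open MeasureTheory Filter Finset
open scoped ENNReal

/-- Existential Roth: a dense subset of `range M` contains a nontrivial 3-AP. -/
lemma roth_exists_ap {ε : ℝ} (hε : 0 < ε) {M : ℕ}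
    (hM : cornersTheoremBound (ε / 3) ≤ M) (E : Finset ℕ)
    (hE : E ⊆ Finset.range M) (hcard : ε * M ≤ #E) :
    ∃ m j : ℕ, 1 ≤ j ∧ m ∈ E ∧ m + j ∈ E ∧ m + 2 * j ∈ E := by
  have h := roth_3ap_theorem_nat ε hε hM E hE hcard
  rw [ThreeAPFree] at h
  push_neg at h
  obtain ⟨a, ha, b, hb, c, hc, habc, hab⟩ := h
  simp only [Finset.mem_coe] at ha hb hc
  rcases lt_or_gt_of_ne hab with h1 | h1
  · refine ⟨a, b - a, by omega, ha, ?_, ?_⟩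
    · have : a + (b - a) = b := by omega
      rwa [this]
    · have : a + 2 * (b - a) = c := by omega
      rwa [this]
  · refine ⟨c, b - c, by omega, hc, ?_, ?_⟩
    · have : c + (b - c) = b := by omega
      rwa [this]
    · have : c + 2 * (b - c) = a := by omega
      rwa [this]

lemma furstenberg_perD
    {X : Type*} [MeasurableSpace X] (μ : Measure X) [IsProbabilityMeasure μ]
    (T : X ≃ᵐ X) (hT : MeasurePreserving T μ μ)
    (A : Set X) (hA : MeasurableSet A) (hApos : 0 < μ A)
    (M d : ℕ) (hM1 : 1 ≤ M)
    (hMroth : cornersTheoremBound ((μ A).toReal / 2 / 3) ≤ M) :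
    μ A / 2 ≤ M * ∑ j ∈ Finset.Icc 1 M,
      μ (A ∩ (⇑T)^[j * d] ⁻¹' A ∩ (⇑T)^[2 * (j * d)] ⁻¹' A) := by
  classical
  set δ := μ A with hδ
  have hδtop : δ ≠ ∞ := measure_ne_top μ A
  have hδ0 : δ ≠ 0 := hApos.ne'
  -- the return-time sets
  set S : ℕ → Set X := fun m => (⇑T)^[m * d] ⁻¹' A with hS
  have hSmeas : ∀ m, MeasurableSet (S m) := fun m =>
    hA.preimage (T.measurable.iterate (m * d))
  have hSμ : ∀ m, μ (S m) = δ := fun m =>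
    (hT.iterate (m * d)).measure_preimage hA.nullMeasurableSet
  -- the counting function
  set g : X → ℝ≥0∞ := fun x => ∑ m ∈ Finset.range M, (S m).indicator (fun _ => 1) x with hg
  have hgmeas : Measurable g :=
    Finset.measurable_sum _ fun m _ => measurable_const.indicator (hSmeas m)
  have hgint : ∫⁻ x, g x ∂μ = M * δ := by
    rw [hg]
    rw [lintegral_finset_sum _ fun m _ => measurable_const.indicator (hSmeas m)]
    simp only [lintegral_indicator_const, hSmeas, hSμ, one_mul]
    rw [Finset.sum_const, Finset.card_range, nsmul_eq_mul]
  have hgle : ∀ x, g x ≤ M := by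
    intro x
    calc g x ≤ ∑ _m ∈ Finset.range M, 1 := by
          refine Finset.sum_le_sum fun m _ => ?_
          by_cases h : x ∈ S m <;> simp [Set.indicator_apply, h]
      _ = M := by simp
  -- the dense-orbit set
  set B : Set X := {x | δ / 2 * M ≤ g x} with hB
  have hBmeas : MeasurableSet B := measurableSet_le measurable_const hgmeas
  -- Markov-type estimate:  δ/2 ≤ μ B
  have hμB : δ / 2 ≤ μ B := by
    have h1 : ∫⁻ x in B, g x ∂μ ≤ M * μ B := by
      calc ∫⁻ x in B, g x ∂μ ≤ ∫⁻ _x in B, (M : ℝ≥0∞) ∂μ :=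
            lintegral_mono fun x => hgle x
        _ = M * μ B := by rw [setLIntegral_const]
    have h2 : ∫⁻ x in Bᶜ, g x ∂μ ≤ δ / 2 * M := by
      calc ∫⁻ x in Bᶜ, g x ∂μ ≤ ∫⁻ _x in Bᶜ, (δ / 2 * M) ∂μ := by
            refine setLIntegral_mono measurable_const fun x hx => ?_
            exact le_of_lt (lt_of_not_ge hx)
        _ = δ / 2 * M * μ Bᶜ := by rw [setLIntegral_const]
        _ ≤ δ / 2 * M * 1 := by gcongr; exact prob_le_one
        _ = δ / 2 * M := mul_one _
    have h3 : (M : ℝ≥0∞) * δ ≤ M * μ B + δ / 2 * M := by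
      rw [← hgint, ← lintegral_add_compl g hBmeas]
      exact add_le_add h1 h2
    have h4 : (M : ℝ≥0∞) * δ ≤ M * (μ B + δ / 2) := by
      rw [mul_add]
      calc (M : ℝ≥0∞) * δ ≤ M * μ B + δ / 2 * M := h3
        _ = M * μ B + M * (δ / 2) := by ring
    have hM0 : (M : ℝ≥0∞) ≠ 0 := by exact_mod_cast Nat.one_le_iff_ne_zero.mp hM1
    have h5 : δ ≤ μ B + δ / 2 :=
      (ENNReal.mul_le_mul_iff_right hM0 (ENNReal.natCast_ne_top M)).mp h4
    have h6 : δ - δ / 2 ≤ μ B := tsub_le_iff_right.mpr h5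
    rwa [ENNReal.sub_half hδtop] at h6
  -- the covering of B
  have hcover : B ⊆ ⋃ m ∈ Finset.range M, ⋃ j ∈ Finset.Icc 1 M,
      (⇑T)^[m * d] ⁻¹' (A ∩ (⇑T)^[j * d] ⁻¹' A ∩ (⇑T)^[2 * (j * d)] ⁻¹' A) := by
    intro x hx
    set E : Finset ℕ := (Finset.range M).filter (fun m => x ∈ S m) with hE
    have hgE : g x = (#E : ℝ≥0∞) := by
      rw [hg, hE, Finset.card_filter]
      push_cast
      refine Finset.sum_congr rfl fun m _ => ?_
      by_cases h : x ∈ S m <;> simp [Set.indicator_apply, h]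
    have hxB : δ / 2 * M ≤ g x := hx
    rw [hgE] at hxB
    have hε : (0 : ℝ) < δ.toReal / 2 := by
      have := ENNReal.toReal_pos hδ0 hδtop
      linarith
    have hcard : δ.toReal / 2 * M ≤ (#E : ℝ) := by
      have := ENNReal.toReal_mono (by simp) hxB
      rw [ENNReal.toReal_mul, ENNReal.toReal_div] at this
      simpa using this
    obtain ⟨m, j, hj1, hm, hmj, hm2j⟩ :=
      roth_exists_ap hε hMroth E (Finset.filter_subset _ _) hcard
    have hmM : m ∈ Finset.range M := (Finset.filter_subset _ _) hm
    have hm2jM : m + 2 * j < M := Finset.mem_range.mp ((Finset.filter_subset _ _) hm2j)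
    have hjM : j ∈ Finset.Icc 1 M := Finset.mem_Icc.mpr ⟨hj1, by omega⟩
    have hiter : ∀ a b : ℕ, (⇑T)^[a] ((⇑T)^[b] x) = (⇑T)^[a + b] x := fun a b =>
      (Function.iterate_add_apply _ a b x).symm
    have hx1 : (⇑T)^[m * d] x ∈ A := (Finset.mem_filter.mp hm).2
    have hx2 : (⇑T)^[j * d] ((⇑T)^[m * d] x) ∈ A := by
      rw [hiter]
      have : j * d + m * d = (m + j) * d := by ring
      rw [this]
      exact (Finset.mem_filter.mp hmj).2
    have hx3 : (⇑T)^[2 * (j * d)] ((⇑T)^[m * d] x) ∈ A := by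
      rw [hiter]
      have : 2 * (j * d) + m * d = (m + 2 * j) * d := by ring
      rw [this]
      exact (Finset.mem_filter.mp hm2j).2
    simp only [Set.mem_iUnion]
    exact ⟨m, hmM, j, hjM, ⟨hx1, hx2⟩, hx3⟩
  -- conclude
  calc δ / 2 ≤ μ B := hμB
    _ ≤ ∑ m ∈ Finset.range M, ∑ j ∈ Finset.Icc 1 M,
          μ ((⇑T)^[m * d] ⁻¹' (A ∩ (⇑T)^[j * d] ⁻¹' A ∩ (⇑T)^[2 * (j * d)] ⁻¹' A)) := by
        refine (measure_mono hcover).trans ?_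
        refine (measure_biUnion_finset_le _ _).trans ?_
        exact Finset.sum_le_sum fun m _ => measure_biUnion_finset_le _ _
    _ = ∑ m ∈ Finset.range M, ∑ j ∈ Finset.Icc 1 M,
          μ (A ∩ (⇑T)^[j * d] ⁻¹' A ∩ (⇑T)^[2 * (j * d)] ⁻¹' A) := by
        refine Finset.sum_congr rfl fun m _ => Finset.sum_congr rfl fun j _ => ?_
        refine (hT.iterate (m * d)).measure_preimage ?_
        exact (((hA.inter (hA.preimage (T.measurable.iterate _))).inter
          (hA.preimage (T.measurable.iterate _)))).nullMeasurableSet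
    _ = M * ∑ j ∈ Finset.Icc 1 M,
          μ (A ∩ (⇑T)^[j * d] ⁻¹' A ∩ (⇑T)^[2 * (j * d)] ⁻¹' A) := by
        rw [Finset.sum_const, Finset.card_range, nsmul_eq_mul]

/-- Multiplicity bound: summing `P (j*d)` over a grid is at most `M` times the full sum. -/
lemma furstenberg_mult (P : ℕ → ℝ≥0∞) (M D N : ℕ) (hMD : M * D ≤ N) :
    ∑ d ∈ Finset.Icc 1 D, ∑ j ∈ Finset.Icc 1 M, P (j * d) ≤
      M * ∑ i ∈ Finset.Icc 1 N, P i := by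
  classical
  set s : Finset (ℕ × ℕ) := Finset.Icc 1 D ×ˢ Finset.Icc 1 M with hs
  have h1 : ∑ d ∈ Finset.Icc 1 D, ∑ j ∈ Finset.Icc 1 M, P (j * d)
      = ∑ p ∈ s, P (p.2 * p.1) := by rw [hs, Finset.sum_product]
  have hmaps : ∀ p ∈ s, p.2 * p.1 ∈ Finset.Icc 1 N := by
    rintro ⟨d, j⟩ hp
    rw [hs, Finset.mem_product, Finset.mem_Icc, Finset.mem_Icc] at hp
    rw [Finset.mem_Icc]
    constructor
    · exact Nat.one_le_iff_ne_zero.mpr (Nat.mul_ne_zero (by omega) (by omega))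
    · calc j * d ≤ M * D := Nat.mul_le_mul hp.2.2 hp.1.2
        _ ≤ N := hMD
  have h2 : ∑ p ∈ s, P (p.2 * p.1)
      = ∑ i ∈ Finset.Icc 1 N, ∑ _p ∈ s.filter (fun p => p.2 * p.1 = i), P i := by
    rw [Finset.sum_fiberwise_of_maps_to' hmaps]
  have hfib : ∀ i ∈ Finset.Icc 1 N, #(s.filter (fun p => p.2 * p.1 = i)) ≤ M := by
    intro i hi
    have hi1 : 1 ≤ i := (Finset.mem_Icc.mp hi).1
    have : #(s.filter (fun p => p.2 * p.1 = i)) ≤ #(Finset.Icc 1 M) := by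
      refine Finset.card_le_card_of_injOn (fun p => p.2) ?_ ?_
      · intro p hp
        have := (Finset.mem_product.mp (Finset.mem_filter.mp hp).1).2
        exact this
      · intro p hp q hq hpq
        simp only [Finset.coe_filter, Set.mem_setOf_eq] at hp hq
        have hp2 : 1 ≤ p.2 := (Finset.mem_Icc.mp (Finset.mem_product.mp hp.1).2).1
        have hpq' : p.2 = q.2 := hpq
        have : p.2 * p.1 = p.2 * q.1 := by rw [hp.2, hpq', hq.2]
        have h1 : p.1 = q.1 := Nat.eq_of_mul_eq_mul_left (by omega) this
        exact Prod.ext h1 hpq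
    simpa using this
  calc ∑ d ∈ Finset.Icc 1 D, ∑ j ∈ Finset.Icc 1 M, P (j * d)
      = ∑ i ∈ Finset.Icc 1 N, ∑ _p ∈ s.filter (fun p => p.2 * p.1 = i), P i := by
        rw [h1, h2]
    _ ≤ ∑ i ∈ Finset.Icc 1 N, M * P i := by
        refine Finset.sum_le_sum fun i hi => ?_
        rw [Finset.sum_const, nsmul_eq_mul]
        exact mul_le_mul_left (by exact_mod_cast hfib i hi) _
    _ = M * ∑ i ∈ Finset.Icc 1 N, P i := (Finset.mul_sum _ _ _).symm


/-- **Furstenberg's ergodic form of Roth's theorem.** For an invertible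
measure-preserving transformation `T` of a probability space `(X, μ)` and any
measurable set `A` of positive measure, the liminf of the multiple recurrence
averages `(1/N) Σ_{i=1}^N μ(A ∩ T⁻ⁱA ∩ T⁻²ⁱA)` is positive. -/
theorem furstenberg_roth
    {X : Type*} [MeasurableSpace X] (μ : Measure X) [IsProbabilityMeasure μ]
    (T : X ≃ᵐ X) (hT : MeasurePreserving T μ μ)
    (A : Set X) (hA : MeasurableSet A) (hApos : 0 < μ A) :
    0 < Filter.liminf
      (fun N : ℕ => (N : ℝ≥0∞)⁻¹ *
        ∑ i ∈ Finset.Icc 1 N,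
          μ (A ∩ (⇑T)^[i] ⁻¹' A ∩ (⇑T)^[2 * i] ⁻¹' A)) Filter.atTop := by
  classical
  set δ := μ A with hδ
  have hδtop : δ ≠ ∞ := measure_ne_top μ A
  have hδ0 : δ ≠ 0 := hApos.ne'
  set P : ℕ → ℝ≥0∞ := fun i => μ (A ∩ (⇑T)^[i] ⁻¹' A ∩ (⇑T)^[2 * i] ⁻¹' A) with hP
  set M : ℕ := max (cornersTheoremBound (δ.toReal / 2 / 3)) 1 with hM
  have hM1 : 1 ≤ M := le_max_right _ _
  have hMroth : cornersTheoremBound (δ.toReal / 2 / 3) ≤ M := le_max_left _ _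
  set K : ℕ := 2 * M ^ 3 with hK
  have hK0 : (K : ℝ≥0∞) ≠ 0 := by
    have : 0 < K := by positivity
    exact_mod_cast this.ne'
  have hKtop : (K : ℝ≥0∞) ≠ ∞ := ENNReal.natCast_ne_top K
  set c : ℝ≥0∞ := δ / 2 * (K : ℝ≥0∞)⁻¹ with hc
  have hc0 : 0 < c := by
    rw [hc]
    refine ENNReal.mul_pos ?_ (ENNReal.inv_ne_zero.mpr hKtop)
    simp only [ne_eq, ENNReal.div_eq_zero_iff, not_or]
    exact ⟨hδ0, ENNReal.ofNat_ne_top⟩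
  have hbound : ∀ N : ℕ, 2 * M ≤ N →
      c ≤ (N : ℝ≥0∞)⁻¹ * ∑ i ∈ Finset.Icc 1 N, P i := by
    intro N hN
    set D : ℕ := N / M with hD
    set SN : ℝ≥0∞ := ∑ i ∈ Finset.Icc 1 N, P i with hSN
    have hMD : M * D ≤ N := by
      rw [hD]; exact Nat.mul_div_le N M
    have hN2MD : N ≤ 2 * M * D := by
      have h1 : N % M < M := Nat.mod_lt _ hM1
      have h2 : M * D + N % M = N := by rw [hD]; exact Nat.div_add_mod N M
      have h3 : 2 * M * D = 2 * (M * D) := by ring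
      rw [h3]
      omega
    have key : (D : ℝ≥0∞) * (δ / 2) ≤ M * (M * SN) := by
      calc (D : ℝ≥0∞) * (δ / 2)
          = ∑ _d ∈ Finset.Icc 1 D, (δ / 2) := by
            rw [Finset.sum_const, Nat.card_Icc, nsmul_eq_mul]
            norm_num
        _ ≤ ∑ d ∈ Finset.Icc 1 D, (M : ℝ≥0∞) * ∑ j ∈ Finset.Icc 1 M, P (j * d) := by
            refine Finset.sum_le_sum fun d _ => ?_
            exact furstenberg_perD μ T hT A hA hApos M d hM1 hMroth
        _ = M * ∑ d ∈ Finset.Icc 1 D, ∑ j ∈ Finset.Icc 1 M, P (j * d) := by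
            rw [Finset.mul_sum]
        _ ≤ M * (M * SN) := by
            exact mul_le_mul_right (furstenberg_mult P M D N hMD) _
    have key2 : (N : ℝ≥0∞) * (δ / 2) ≤ (K : ℝ≥0∞) * SN := by
      calc (N : ℝ≥0∞) * (δ / 2) ≤ ((2 * M * D : ℕ) : ℝ≥0∞) * (δ / 2) := by
            exact mul_le_mul_left (by exact_mod_cast hN2MD) _
        _ = 2 * M * ((D : ℝ≥0∞) * (δ / 2)) := by push_cast; ring
        _ ≤ 2 * M * ((M : ℝ≥0∞) * (M * SN)) := mul_le_mul_right key _
        _ = (K : ℝ≥0∞) * SN := by rw [hK]; push_cast; ring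
    have hNne : (N : ℝ≥0∞) ≠ 0 := by
      have : 0 < N := by omega
      exact_mod_cast this.ne'
    have hdiv : (N : ℝ≥0∞)⁻¹ * SN = SN / (N : ℝ≥0∞) := by
      rw [div_eq_mul_inv, mul_comm]
    rw [hc, hdiv,
      ENNReal.le_div_iff_mul_le (Or.inl hNne) (Or.inl (ENNReal.natCast_ne_top N))]
    calc δ / 2 * (K : ℝ≥0∞)⁻¹ * N = (K : ℝ≥0∞)⁻¹ * ((N : ℝ≥0∞) * (δ / 2)) := by ring
      _ ≤ (K : ℝ≥0∞)⁻¹ * ((K : ℝ≥0∞) * SN) := mul_le_mul_right key2 _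
      _ = (K : ℝ≥0∞)⁻¹ * (K : ℝ≥0∞) * SN := by ring
      _ = SN := by rw [ENNReal.inv_mul_cancel hK0 hKtop, one_mul]
  refine lt_of_lt_of_le hc0 ?_
  refine Filter.le_liminf_of_le ?_ ?_
  · isBoundedDefault
  · exact Filter.eventually_atTop.mpr ⟨2 * M, fun N hN => hbound N hN⟩
end

section
/- Let (X, μ) be a probability space and T : X → X an invertible measure-preserving transformation that is weakly mixing. Then the transformation S : X × X → X × X defined by S(x, y) = (T x, T² y) is ergodic with respect to the product measure μ ⊗ μ. -/
open MeasureTheory Filter Finset Function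
open scoped ENNReal Topology RealInnerProductSpace
set_option synthInstance.maxHeartbeats 1000000
set_option maxHeartbeats 1000000

noncomputable def cavg (f : ℕ → ℝ) : ℕ → ℝ := fun N => (N : ℝ)⁻¹ * ∑ n ∈ Finset.range N, f n

lemma cavg_add (f g : ℕ → ℝ) (N : ℕ) : cavg (fun n => f n + g n) N = cavg f N + cavg g N := by
  simp [cavg, Finset.sum_add_distrib, mul_add]

lemma cavg_sub (f g : ℕ → ℝ) (N : ℕ) : cavg (fun n => f n - g n) N = cavg f N - cavg g N := by
  simp [cavg, Finset.sum_sub_distrib, mul_sub]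

lemma cavg_smul (r : ℝ) (f : ℕ → ℝ) (N : ℕ) : cavg (fun n => r * f n) N = r * cavg f N := by
  simp [cavg, ← Finset.mul_sum]; ring

lemma cavg_nonneg {f : ℕ → ℝ} (hf : ∀ n, 0 ≤ f n) (N : ℕ) : 0 ≤ cavg f N :=
  mul_nonneg (by positivity) (Finset.sum_nonneg fun n _ => hf n)

lemma cavg_mono {f g : ℕ → ℝ} (h : ∀ n, f n ≤ g n) (N : ℕ) : cavg f N ≤ cavg g N :=
  mul_le_mul_of_nonneg_left (Finset.sum_le_sum fun n _ => h n) (by positivity)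

lemma cavg_const_eval (r : ℝ) (N : ℕ) : cavg (fun _ => r) N = (N : ℝ)⁻¹ * N * r := by
  simp [cavg]; ring

lemma cavg_const_le {r : ℝ} (hr : 0 ≤ r) (N : ℕ) : cavg (fun _ => r) N ≤ r := by
  rw [cavg_const_eval]
  rcases Nat.eq_zero_or_pos N with h | h
  · simp [h, hr]
  · rw [inv_mul_cancel₀ (by positivity), one_mul]

lemma tendsto_cavg_const (r : ℝ) : Tendsto (cavg fun _ => r) atTop (𝓝 r) := by
  apply Tendsto.congr' (f₁ := fun _ => r)
  · filter_upwards [eventually_ge_atTop 1] with N hN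
    rw [cavg_const_eval, inv_mul_cancel₀ (by positivity), one_mul]
  · exact tendsto_const_nhds

lemma abs_cavg_le {f u : ℕ → ℝ} (h : ∀ n, |f n| ≤ u n) (N : ℕ) : |cavg f N| ≤ cavg u N := by
  calc |cavg f N| ≤ (N : ℝ)⁻¹ * ∑ n ∈ Finset.range N, |f n| := by
        rw [cavg, abs_mul, abs_inv, Nat.abs_cast]
        exact mul_le_mul_of_nonneg_left (Finset.abs_sum_le_sum_abs _ _) (by positivity)
    _ ≤ cavg u N := cavg_mono h N

/-- If `|f n - L| ≤ u n` and `cavg u → 0` then `cavg f → L`. -/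
lemma tendsto_cavg_of_bound {f u : ℕ → ℝ} {L : ℝ} (h : ∀ n, |f n - L| ≤ u n)
    (hu : Tendsto (cavg u) atTop (𝓝 0)) : Tendsto (cavg f) atTop (𝓝 L) := by
  have h0 : Tendsto (cavg fun n => f n - L) atTop (𝓝 0) := by
    refine tendsto_of_tendsto_of_tendsto_of_le_of_le (by simpa using hu.neg) hu
      (fun N => ?_) (fun N => ?_)
    · have := abs_cavg_le h N; rw [abs_le] at this; linarith [this.1]
    · have := abs_cavg_le h N; rw [abs_le] at this; linarith [this.2]
  have := h0.add (tendsto_cavg_const L)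
  rw [zero_add] at this
  apply this.congr
  intro N
  rw [← cavg_add]
  simp

/-- Cauchy–Schwarz for Cesàro averages. -/
lemma tendsto_cavg_of_sq {b : ℕ → ℝ} (hb : ∀ n, 0 ≤ b n)
    (h : Tendsto (cavg fun n => b n ^ 2) atTop (𝓝 0)) :
    Tendsto (cavg b) atTop (𝓝 0) := by
  have key : ∀ N, cavg b N ≤ Real.sqrt (cavg (fun n => b n ^ 2) N) := by
    intro N
    rw [Real.le_sqrt (cavg_nonneg hb N) (cavg_nonneg (fun n => sq_nonneg _) N)]
    have CS := sq_sum_le_card_mul_sum_sq (s := Finset.range N) (f := b)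
    simp only [Finset.card_range] at CS
    have hN : (0:ℝ) ≤ (N:ℝ)⁻¹ := by positivity
    have h1 : ((N:ℝ)⁻¹ * N) ≤ 1 := by
      rcases Nat.eq_zero_or_pos N with h | h
      · simp [h]
      · rw [inv_mul_cancel₀ (by positivity)]
    have hs : (0:ℝ) ≤ ∑ n ∈ Finset.range N, b n ^ 2 :=
      Finset.sum_nonneg fun n _ => sq_nonneg _
    calc cavg b N ^ 2 = (N:ℝ)⁻¹ * (N:ℝ)⁻¹ * (∑ n ∈ Finset.range N, b n) ^ 2 := by
          rw [cavg]; ring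
      _ ≤ (N:ℝ)⁻¹ * (N:ℝ)⁻¹ * ((N:ℝ) * ∑ n ∈ Finset.range N, b n ^ 2) := by
          apply mul_le_mul_of_nonneg_left CS (by positivity)
      _ = ((N:ℝ)⁻¹ * N) * cavg (fun n => b n ^ 2) N := by rw [cavg]; ring
      _ ≤ 1 * cavg (fun n => b n ^ 2) N :=
          mul_le_mul_of_nonneg_right h1 (cavg_nonneg (fun n => sq_nonneg _) N)
      _ = cavg (fun n => b n ^ 2) N := one_mul _
  have hsq : Tendsto (fun N => Real.sqrt (cavg (fun n => b n ^ 2) N)) atTop (𝓝 0) := by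
    have := (Real.continuous_sqrt.tendsto 0).comp h
    simpa [Function.comp_def] using this
  exact tendsto_of_tendsto_of_tendsto_of_le_of_le tendsto_const_nhds hsq
    (cavg_nonneg hb) key

/-- Cesàro convergence to 0 of a nonneg sequence passes to the even subsequence. -/
lemma tendsto_cavg_even {b : ℕ → ℝ} (hb : ∀ n, 0 ≤ b n)
    (h : Tendsto (cavg b) atTop (𝓝 0)) :
    Tendsto (cavg fun n => b (2 * n)) atTop (𝓝 0) := by
  have key : ∀ N, cavg (fun n => b (2 * n)) N ≤ 2 * cavg b (2 * N) := by
    intro N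
    have hsum : ∑ n ∈ Finset.range N, b (2 * n) ≤ ∑ m ∈ Finset.range (2 * N), b m := by
      have himg : ∑ n ∈ Finset.range N, b (2 * n)
          = ∑ m ∈ (Finset.range N).image (fun n => 2 * n), b m :=
        (Finset.sum_image (fun x _ y _ hxy => by omega)).symm
      rw [himg]
      apply Finset.sum_le_sum_of_subset_of_nonneg
      · intro m hm
        simp only [Finset.mem_image, Finset.mem_range] at hm ⊢
        obtain ⟨n, hn, rfl⟩ := hm; omega
      · intro m _ _; exact hb m
    calc cavg (fun n => b (2 * n)) N ≤ (N:ℝ)⁻¹ * ∑ m ∈ Finset.range (2 * N), b m :=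
          mul_le_mul_of_nonneg_left hsum (by positivity)
      _ = 2 * cavg b (2 * N) := by
          rw [cavg]
          rcases Nat.eq_zero_or_pos N with hN | hN
          · simp [hN]
          · rw [Nat.cast_mul]
            push_cast
            rw [mul_inv]
            ring
  have h2 : Tendsto (fun N => 2 * cavg b (2 * N)) atTop (𝓝 0) := by
    have hcomp : Tendsto (fun N => cavg b (2 * N)) atTop (𝓝 0) :=
      h.comp (Filter.tendsto_atTop_atTop.mpr fun b => ⟨b, fun a ha => by omega⟩)
    simpa using hcomp.const_mul 2
  exact tendsto_of_tendsto_of_tendsto_of_le_of_le tendsto_const_nhds h2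
    (cavg_nonneg (fun n => hb _)) key

/-- Moore–Osgood style approximation lemma. -/
lemma tendsto_of_approx {g : ℕ → ℝ} {L : ℝ} {gk : ℕ → ℕ → ℝ} {Lk δ : ℕ → ℝ}
    (hclose : ∀ k N, |g N - gk k N| ≤ δ k)
    (hgk : ∀ k, Tendsto (gk k) atTop (𝓝 (Lk k)))
    (hδ : Tendsto δ atTop (𝓝 0)) (hLk : Tendsto Lk atTop (𝓝 L)) :
    Tendsto g atTop (𝓝 L) := by
  rw [Metric.tendsto_atTop]
  intro ε hε
  have h1 : ∀ᶠ k in atTop, |δ k| < ε / 3 := by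
    have := hδ.eventually (eventually_abs_sub_lt 0 (by positivity : (0:ℝ) < ε/3))
    simpa using this
  have h2 : ∀ᶠ k in atTop, dist (Lk k) L < ε / 3 :=
    hLk.eventually (Metric.ball_mem_nhds L (by positivity))
  obtain ⟨k, hk1, hk2⟩ := (h1.and h2).exists
  obtain ⟨N₀, hN₀⟩ := Metric.tendsto_atTop.mp (hgk k) (ε / 3) (by positivity)
  refine ⟨N₀, fun N hN => ?_⟩
  have hc := hclose k N
  have hg := hN₀ N hN
  rw [Real.dist_eq] at *
  have : |g N - L| ≤ |g N - gk k N| + |gk k N - Lk k| + |Lk k - L| := by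
    calc |g N - L| = |(g N - gk k N) + (gk k N - Lk k) + (Lk k - L)| := by ring_nf
      _ ≤ _ := by
          refine (abs_add_le _ _).trans ?_
          exact add_le_add_left (abs_add_le _ _) _
  have hδk : |g N - gk k N| ≤ |δ k| := hc.trans (le_abs_self _)
  linarith

lemma indicatorConstLp_congr_set {α : Type*} [MeasurableSpace α] {μ : Measure α} {s t : Set α}
    (h : s = t) (hs : MeasurableSet s) (hμs : μ s ≠ ∞) (ht : MeasurableSet t) (hμt : μ t ≠ ∞) :
    indicatorConstLp 2 hs hμs (1:ℝ) = indicatorConstLp 2 ht hμt (1:ℝ) := by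
  subst h; rfl

/-- Mean ergodic theorem: Cesàro averages of correlations of an ergodic map converge to the
product of the measures. -/
lemma cesaro_mixing {Y : Type*} [MeasurableSpace Y] {ν : Measure Y} [IsProbabilityMeasure ν]
    {R : Y → Y} (hR : Ergodic R ν) {A B : Set Y} (hA : MeasurableSet A) (hB : MeasurableSet B) :
    Tendsto (cavg fun n => (ν (R^[n] ⁻¹' A ∩ B)).toReal) atTop
      (𝓝 ((ν A).toReal * (ν B).toReal)) := by
  have hmp : MeasurePreserving R ν ν := hR.toMeasurePreserving
  set U : Lp ℝ 2 ν →L[ℝ] Lp ℝ 2 ν :=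
    (Lp.compMeasurePreservingₗᵢ (E := ℝ) ℝ R hmp).toContinuousLinearMap with hUdef
  have hU : ‖U‖ ≤ 1 := LinearIsometry.norm_toContinuousLinearMap_le _
  have hUapp : ∀ g, U g = Lp.compMeasurePreserving R hmp g := fun g => rfl
  set u : Lp ℝ 2 ν := indicatorConstLp 2 MeasurableSet.univ (measure_ne_top ν _) (1:ℝ) with hudef
  have hu_norm : ‖u‖ = 1 := by
    rw [hudef, norm_indicatorConstLp (by norm_num) (by norm_num)]
    simp
  have hu_coe : (u : Y → ℝ) =ᵐ[ν] fun _ => (1:ℝ) := by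
    filter_upwards [indicatorConstLp_coeFn (p := 2) (hs := MeasurableSet.univ)
      (hμs := measure_ne_top ν Set.univ) (c := (1:ℝ))] with x hx
    rw [hx]; simp
  -- U fixes u
  have hUu : U u = u := by
    rw [hUapp]
    exact (Lp.indicatorConstLp_compMeasurePreserving MeasurableSet.univ (measure_ne_top ν _)
      (1:ℝ) hmp).trans (indicatorConstLp_congr_set Set.preimage_univ _ _ _ _)
  -- any fixed vector is a multiple of u
  have hker : ∀ g : Lp ℝ 2 ν, U g = g → ∃ c : ℝ, g = c • u := by
    intro g hg
    have h1 : ⇑(U g) =ᵐ[ν] (g : Y → ℝ) ∘ R := Lp.coeFn_compMeasurePreserving g hmp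
    have h2 : (g : Y → ℝ) ∘ R =ᵐ[ν] g := by
      rw [hg] at h1; exact h1.symm
    obtain ⟨c, hc⟩ := hR.ae_eq_const_of_ae_eq_comp_ae (Lp.aestronglyMeasurable g) h2
    refine ⟨c, Lp.ext ?_⟩
    filter_upwards [hc, Lp.coeFn_smul c u, hu_coe] with x h1 h2 h3
    rw [h1, h2, Pi.smul_apply, h3]
    simp
  -- the two indicator functions
  set fA : Lp ℝ 2 ν := indicatorConstLp 2 hA (measure_ne_top ν A) (1:ℝ) with hfAdef
  set fB : Lp ℝ 2 ν := indicatorConstLp 2 hB (measure_ne_top ν B) (1:ℝ) with hfBdef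
  have hinner_ind : ∀ (s : Set Y) (hs : MeasurableSet s) (hμs : ν s ≠ ∞),
      ⟪indicatorConstLp 2 hs hμs (1:ℝ), fB⟫ = (ν (s ∩ B)).toReal := by
    intro s hs hμs
    rw [L2.inner_indicatorConstLp_one hs hμs fB, hfBdef,
      setIntegral_indicatorConstLp hs hB (measure_ne_top ν B) (1:ℝ)]
    simp [Set.inter_comm, Measure.real]
  have huA : ⟪u, fA⟫ = (ν A).toReal := by
    rw [hudef, L2.inner_indicatorConstLp_one MeasurableSet.univ (measure_ne_top ν _) fA, hfAdef,
      setIntegral_indicatorConstLp MeasurableSet.univ hA (measure_ne_top ν A) (1:ℝ)]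
    simp [Measure.real]
  have huB : ⟪u, fB⟫ = (ν B).toReal := hinner_ind _ MeasurableSet.univ (measure_ne_top ν _)
    |>.trans (by simp)
  -- the orthogonal projection of fA onto the fixed space
  have hproj : (Submodule.orthogonalProjectionOnto (U.eqLocus (1 : Lp ℝ 2 ν →L[ℝ] Lp ℝ 2 ν)) fA :
      Lp ℝ 2 ν) = ⟪u, fA⟫ • u := by
    rw [Submodule.coe_orthogonalProjectionOnto_apply]
    apply Submodule.eq_starProjection_of_mem_of_inner_eq_zero
    · rw [LinearMap.mem_eqLocus]
      show U (⟪u, fA⟫ • u) = ⟪u, fA⟫ • u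
      rw [_root_.map_smul, hUu]
    · intro w hw
      rw [LinearMap.mem_eqLocus] at hw
      obtain ⟨c, rfl⟩ := hker w hw
      rw [inner_sub_left, real_inner_smul_right, real_inner_smul_left, real_inner_smul_right,
        real_inner_self_eq_norm_sq, hu_norm, real_inner_comm fA u]
      ring
  -- mean ergodic theorem
  have MET := U.tendsto_birkhoffAverage_orthogonalProjection (𝕜 := ℝ) hU fA
  rw [hproj] at MET
  have MET2 : Tendsto (fun N => ⟪birkhoffAverage ℝ U _root_.id N fA, fB⟫) atTop
      (𝓝 ((ν A).toReal * (ν B).toReal)) := by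
    have := MET.inner (𝕜 := ℝ) (tendsto_const_nhds (x := fB))
    rwa [real_inner_smul_left, huA, huB] at this
  -- identify the Birkhoff averages with the Cesàro averages of correlations
  have hAn : ∀ n : ℕ, MeasurableSet (R^[n] ⁻¹' A) := fun n =>
    hA.preimage (hmp.iterate n).measurable
  have hUiter : ∀ n : ℕ, (⇑U)^[n] fA
      = indicatorConstLp 2 (hAn n) (measure_ne_top ν _) (1:ℝ) := by
    intro n
    induction n with
    | zero =>
      exact indicatorConstLp_congr_set (show A = R^[0] ⁻¹' A by simp) hA
        (measure_ne_top ν A) (hAn 0) (measure_ne_top ν _)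
    | succ n ih =>
      rw [Function.iterate_succ_apply', ih, hUapp, Lp.indicatorConstLp_compMeasurePreserving]
      exact indicatorConstLp_congr_set (by ext; simp [Function.iterate_succ_apply]) _ _ _ _
  have hterm : ∀ n : ℕ, ⟪(⇑U)^[n] fA, fB⟫ = (ν (R^[n] ⁻¹' A ∩ B)).toReal := by
    intro n
    rw [hUiter n]
    exact hinner_ind _ (hAn n) (measure_ne_top ν _)
  apply MET2.congr
  intro N
  rw [birkhoffAverage, birkhoffSum, real_inner_smul_left, sum_inner]
  simp only [id_eq, hterm]
  rfl

lemma aeconst_of_prob {α : Type*} [MeasurableSpace α] {μ : Measure α} [IsProbabilityMeasure μ]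
    {s : Set α} (hs : MeasurableSet s) (h : μ s = 0 ∨ μ s = 1) :
    Filter.EventuallyConst s (ae μ) := by
  rw [Filter.eventuallyConst_set']
  rcases h with h | h
  · exact Or.inl (ae_eq_empty.mpr h)
  · exact Or.inr (ae_eq_univ.mpr ((prob_compl_eq_zero_iff hs).mpr h))

lemma abs_rect_bound (k1 k2 a e : ℝ) (hk10 : 0 ≤ k1) (hk11 : k1 ≤ 1) (hk20 : 0 ≤ k2)
    (hk21 : k2 ≤ 1) (ha1 : |a| ≤ 1) :
    |(k1 + a) * (k2 + e) - k1 * k2| ≤ |a| + 2 * |e| := by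
  have h2 : (k1 + a) * (k2 + e) - k1 * k2 = a * k2 + e * k1 + a * e := by ring
  rw [h2]
  calc |a * k2 + e * k1 + a * e| ≤ |a * k2| + |e * k1| + |a * e| :=
        (abs_add_le _ _).trans (add_le_add_left (abs_add_le _ _) _)
    _ = |a| * k2 + |e| * k1 + |a| * |e| := by
        rw [abs_mul, abs_mul, abs_mul, abs_of_nonneg hk20, abs_of_nonneg hk10]
    _ ≤ |a| * 1 + |e| * 1 + 1 * |e| := by gcongr
    _ = |a| + 2 * |e| := by ring

lemma tendsto_cavg_quad (x : ℕ → ℝ) (k L1 L2 : ℝ)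
    (h1 : Tendsto (cavg fun n => (x n) ^ 2) atTop (𝓝 L1))
    (h2 : Tendsto (cavg x) atTop (𝓝 L2)) :
    Tendsto (cavg fun n => (x n - k) ^ 2) atTop (𝓝 (L1 - 2 * k * L2 + k ^ 2)) := by
  have hpt : ∀ N, cavg (fun n => (x n - k) ^ 2) N
      = cavg (fun n => (x n) ^ 2) N - 2 * k * cavg x N + cavg (fun _ => k ^ 2) N := by
    intro N
    have hsum : ∑ n ∈ Finset.range N, (x n - k) ^ 2
        = ∑ n ∈ Finset.range N, ((x n) ^ 2 - 2 * k * x n + k ^ 2) := by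
      apply Finset.sum_congr rfl; intros; ring
    have hmul : ∑ n ∈ Finset.range N, 2 * k * x n = 2 * k * ∑ n ∈ Finset.range N, x n := by
      rw [Finset.mul_sum]
    simp only [cavg, hsum, Finset.sum_add_distrib, Finset.sum_sub_distrib, hmul]
    ring
  have hB := (h1.sub (h2.const_mul (2 * k))).add (tendsto_cavg_const (k ^ 2))
  exact hB.congr fun N => (hpt N).symm

/-- For a weakly mixing transformation, the Cesàro averages of the absolute deviations of
correlations from the product tend to zero. -/
lemma cesaro_abs_corr {X : Type*} [MeasurableSpace X] {μ : Measure X} [IsProbabilityMeasure μ]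
    {T : X → X} (hTerg : Ergodic T μ)
    (hTwm : Ergodic (fun p : X × X => (T p.1, T p.2)) (μ.prod μ))
    {P Q : Set X} (hP : MeasurableSet P) (hQ : MeasurableSet Q) :
    Tendsto (cavg fun n => |(μ (T^[n] ⁻¹' P ∩ Q)).toReal - (μ P).toReal * (μ Q).toReal|)
      atTop (𝓝 0) := by
  have F1 := cesaro_mixing hTerg hP hQ
  have F2 : Tendsto (cavg fun n => ((μ (T^[n] ⁻¹' P ∩ Q)).toReal) ^ 2) atTop
      (𝓝 (((μ P).toReal * (μ Q).toReal) ^ 2)) := by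
    have h := cesaro_mixing hTwm (hP.prod hP) (hQ.prod hQ)
    have hfun : ∀ n : ℕ, ((μ.prod μ) ((fun p : X × X => (T p.1, T p.2))^[n] ⁻¹' (P ×ˢ P)
        ∩ Q ×ˢ Q)).toReal = ((μ (T^[n] ⁻¹' P ∩ Q)).toReal) ^ 2 := by
      intro n
      rw [show (fun p : X × X => (T p.1, T p.2)) = Prod.map T T from rfl, Prod.map_iterate,
        Set.preimage_prod_map_prod, Set.prod_inter_prod, Measure.prod_prod, ENNReal.toReal_mul,
        sq]
    have hval : ((μ.prod μ) (P ×ˢ P)).toReal * ((μ.prod μ) (Q ×ˢ Q)).toReal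
        = (((μ P).toReal * (μ Q).toReal)) ^ 2 := by
      rw [Measure.prod_prod, Measure.prod_prod, ENNReal.toReal_mul, ENNReal.toReal_mul]; ring
    simp only [hfun] at h
    rwa [hval] at h
  have hq := tendsto_cavg_quad _ ((μ P).toReal * (μ Q).toReal) _ _ F2 F1
  have hz : (((μ P).toReal * (μ Q).toReal) ^ 2
      - 2 * ((μ P).toReal * (μ Q).toReal) * ((μ P).toReal * (μ Q).toReal)
      + ((μ P).toReal * (μ Q).toReal) ^ 2) = 0 := by ring
  rw [hz] at hq
  apply tendsto_cavg_of_sq (fun n => abs_nonneg _)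
  simpa only [sq_abs] using hq

/-- If `T` is a weakly mixing invertible measure-preserving transformation of a
probability space `(X, μ)`, then `T × T²` is ergodic on `(X × X, μ ⊗ μ)`. -/
theorem weakMixing_T_times_Tsq_ergodic
    {X : Type*} [MeasurableSpace X] (μ : Measure X) [IsProbabilityMeasure μ]
    (T : X ≃ᵐ X) (hT : MeasurePreserving T μ μ)
    (hTwm : Ergodic (fun p : X × X => (T p.1, T p.2)) (μ.prod μ)) :
    Ergodic (fun p : X × X => (T p.1, (⇑T)^[2] p.2)) (μ.prod μ) := by
  set ν := μ.prod μ with hνdef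
  set S : X × X → X × X := fun p => (T p.1, (⇑T)^[2] p.2) with hSdef
  have hS : MeasurePreserving S ν ν := hT.prod (hT.iterate 2)
  -- T is ergodic
  have hTerg : Ergodic (⇑T) μ := by
    refine ⟨hT, ⟨fun s hs hTs => ?_⟩⟩
    apply aeconst_of_prob hs
    have hpre : (fun p : X × X => (T p.1, T p.2)) ⁻¹' (s ×ˢ Set.univ) = s ×ˢ Set.univ := by
      have h0 : (fun p : X × X => (T p.1, T p.2)) ⁻¹' (s ×ˢ Set.univ)
          = (⇑T ⁻¹' s) ×ˢ (⇑T ⁻¹' Set.univ) := rfl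
      rw [h0, hTs, Set.preimage_univ]
    have h2 := hTwm.ae_empty_or_univ (hs.prod MeasurableSet.univ) hpre
    have hmeq : (μ.prod μ) (s ×ˢ Set.univ) = μ s := by
      rw [Measure.prod_prod, measure_univ, mul_one]
    rcases h2 with h | h
    · left; rw [← hmeq]; exact ae_eq_empty.mp h
    · right; rw [← hmeq, measure_congr h, measure_univ]
  -- iterates of S on rectangles
  have hSn_pre : ∀ (n : ℕ) (A B : Set X),
      S^[n] ⁻¹' (A ×ˢ B) = ((⇑T)^[n] ⁻¹' A) ×ˢ ((⇑T)^[2 * n] ⁻¹' B) := by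
    intro n A B
    rw [show S = Prod.map ⇑T ((⇑T)^[2]) from rfl, Prod.map_iterate,
      Set.preimage_prod_map_prod, Function.iterate_mul]
  have htr1 : ∀ s : Set X, (μ s).toReal ≤ 1 := fun s => by
    simpa using ENNReal.toReal_mono (by simp) (prob_le_one (μ := μ) (s := s))
  have htr0 : ∀ s : Set X, (0:ℝ) ≤ (μ s).toReal := fun s => ENNReal.toReal_nonneg
  -- the rectangle case
  have hrect : ∀ A B C D : Set X, MeasurableSet A → MeasurableSet B → MeasurableSet C →
      MeasurableSet D →
      Tendsto (cavg fun n => (ν (S^[n] ⁻¹' (A ×ˢ B) ∩ C ×ˢ D)).toReal) atTop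
        (𝓝 ((ν (A ×ˢ B)).toReal * (ν (C ×ˢ D)).toReal)) := by
    intro A B C D hA hB hC hD
    have ha := cesaro_abs_corr hTerg hTwm hA hC
    have hb := cesaro_abs_corr hTerg hTwm hB hD
    have he := tendsto_cavg_even (fun n => abs_nonneg _) hb
    have h2e : Tendsto (cavg fun n =>
        2 * |(μ ((⇑T)^[2 * n] ⁻¹' B ∩ D)).toReal - (μ B).toReal * (μ D).toReal|) atTop
        (𝓝 0) := by
      have h := he.const_mul 2
      rw [mul_zero] at h
      exact h.congr fun N => (cavg_smul 2 _ N).symm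
    have hsum : Tendsto (cavg fun n =>
        |(μ ((⇑T)^[n] ⁻¹' A ∩ C)).toReal - (μ A).toReal * (μ C).toReal|
          + 2 * |(μ ((⇑T)^[2 * n] ⁻¹' B ∩ D)).toReal - (μ B).toReal * (μ D).toReal|) atTop
        (𝓝 0) := by
      have h := ha.add h2e
      rw [add_zero] at h
      exact h.congr fun N => (cavg_add _ _ N).symm
    apply tendsto_cavg_of_bound _ hsum
    intro n
    have hterm : (ν (S^[n] ⁻¹' (A ×ˢ B) ∩ C ×ˢ D)).toReal
        = ((μ A).toReal * (μ C).toReal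
            + ((μ ((⇑T)^[n] ⁻¹' A ∩ C)).toReal - (μ A).toReal * (μ C).toReal))
          * ((μ B).toReal * (μ D).toReal
            + ((μ ((⇑T)^[2 * n] ⁻¹' B ∩ D)).toReal - (μ B).toReal * (μ D).toReal)) := by
      rw [hSn_pre n A B, Set.prod_inter_prod, hνdef, Measure.prod_prod, ENNReal.toReal_mul]
      ring
    have hL : (ν (A ×ˢ B)).toReal * (ν (C ×ˢ D)).toReal
        = ((μ A).toReal * (μ C).toReal) * ((μ B).toReal * (μ D).toReal) := by
      rw [hνdef, Measure.prod_prod, Measure.prod_prod, ENNReal.toReal_mul, ENNReal.toReal_mul]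
      ring
    rw [hterm, hL]
    have habs : |(μ ((⇑T)^[n] ⁻¹' A ∩ C)).toReal - (μ A).toReal * (μ C).toReal| ≤ 1 := by
      rw [abs_le]; constructor
      · nlinarith [htr0 ((⇑T)^[n] ⁻¹' A ∩ C), htr0 A, htr0 C, htr1 A, htr1 C]
      · nlinarith [htr1 ((⇑T)^[n] ⁻¹' A ∩ C), htr0 A, htr0 C, htr1 A, htr1 C]
    exact abs_rect_bound _ _ _ _ (mul_nonneg (htr0 A) (htr0 C))
      (by nlinarith [htr0 A, htr0 C, htr1 A, htr1 C])
      (mul_nonneg (htr0 B) (htr0 D))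
      (by nlinarith [htr0 B, htr0 D, htr1 B, htr1 D]) habs
  -- extension to all measurable sets via Dynkin's π-λ theorem
  have hdyn : ∀ C D : Set X, MeasurableSet C → MeasurableSet D → ∀ ⦃W : Set (X × X)⦄,
      MeasurableSet W →
      Tendsto (cavg fun n => (ν (S^[n] ⁻¹' W ∩ C ×ˢ D)).toReal) atTop
        (𝓝 ((ν W).toReal * (ν (C ×ˢ D)).toReal)) := by
    intro C D hC hD
    have hG : MeasurableSet (C ×ˢ D) := hC.prod hD
    refine MeasurableSpace.induction_on_inter generateFrom_prod.symm isPiSystem_prod ?_ ?_ ?_ ?_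
    · -- empty set
      simp only [Set.preimage_empty, Set.empty_inter, measure_empty, ENNReal.toReal_zero,
        zero_mul]
      exact tendsto_cavg_const 0
    · -- rectangles
      rintro t ⟨A, hA, B, hB, rfl⟩
      exact hrect A B C D hA hB hC hD
    · -- complements
      intro W hW ih
      have hsplit : ∀ n : ℕ, (ν (S^[n] ⁻¹' Wᶜ ∩ C ×ˢ D)).toReal
          = (ν (C ×ˢ D)).toReal - (ν (S^[n] ⁻¹' W ∩ C ×ˢ D)).toReal := by
        intro n
        have hVm : MeasurableSet (S^[n] ⁻¹' W) := hW.preimage (hS.iterate n).measurable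
        have h1 : ν (C ×ˢ D ∩ S^[n] ⁻¹' W) + ν (C ×ˢ D \ S^[n] ⁻¹' W) = ν (C ×ˢ D) :=
          measure_inter_add_diff (C ×ˢ D) hVm
        have h2 : S^[n] ⁻¹' Wᶜ ∩ C ×ˢ D = C ×ˢ D \ S^[n] ⁻¹' W := by
          rw [Set.preimage_compl]
          ext p
          simp only [Set.mem_inter_iff, Set.mem_compl_iff, Set.mem_diff]
          tauto
        have h3 := congrArg ENNReal.toReal h1
        rw [ENNReal.toReal_add (measure_ne_top _ _) (measure_ne_top _ _)] at h3
        rw [h2, Set.inter_comm (S^[n] ⁻¹' W) (C ×ˢ D)] at *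
        linarith
      have hcm : (ν Wᶜ).toReal = 1 - (ν W).toReal := by
        rw [prob_compl_eq_one_sub hW, ENNReal.toReal_sub_of_le prob_le_one ENNReal.one_ne_top,
          ENNReal.toReal_one]
      have h3 : Tendsto (cavg fun n => (ν (C ×ˢ D)).toReal
          - (ν (S^[n] ⁻¹' W ∩ C ×ˢ D)).toReal) atTop
          (𝓝 ((ν (C ×ˢ D)).toReal - (ν W).toReal * (ν (C ×ˢ D)).toReal)) := by
        have h := (tendsto_cavg_const (ν (C ×ˢ D)).toReal).sub ih
        exact h.congr fun N => (cavg_sub _ _ N).symm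
      have hfun : (fun n : ℕ => (ν (S^[n] ⁻¹' Wᶜ ∩ C ×ˢ D)).toReal)
          = fun n => (ν (C ×ˢ D)).toReal - (ν (S^[n] ⁻¹' W ∩ C ×ˢ D)).toReal := funext hsplit
      have hval : (ν Wᶜ).toReal * (ν (C ×ˢ D)).toReal
          = (ν (C ×ˢ D)).toReal - (ν W).toReal * (ν (C ×ˢ D)).toReal := by
        rw [hcm]; ring
      rw [hfun, hval]
      exact h3
    · -- disjoint unions
      intro f hdisj hmeas ih
      have hWm : MeasurableSet (⋃ i, f i) := MeasurableSet.iUnion hmeas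
      set Wk : ℕ → Set (X × X) := fun k => ⋃ i ∈ Finset.range k, f i with hWkdef
      have hWkm : ∀ k, MeasurableSet (Wk k) := fun k =>
        (Finset.range k).measurableSet_biUnion (fun i _ => hmeas i)
      have hWksub : ∀ k, Wk k ⊆ ⋃ i, f i := fun k =>
        Set.iUnion₂_subset fun i _ => Set.subset_iUnion f i
      have hhs : HasSum (fun i => (ν (f i)).toReal) ((ν (⋃ i, f i)).toReal) := by
        have h1 : ν (⋃ i, f i) = ∑' i, ν (f i) := measure_iUnion hdisj hmeas
        have h2 : Summable fun i => (ν (f i)).toReal :=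
          ENNReal.summable_toReal (by rw [← h1]; exact measure_ne_top ν _)
        have h3 := h2.hasSum
        rwa [← ENNReal.tsum_toReal_eq (fun i => measure_ne_top ν (f i)), ← h1] at h3
      have hWk_meas : ∀ k, (ν (Wk k)).toReal = ∑ i ∈ Finset.range k, (ν (f i)).toReal := by
        intro k
        rw [measure_biUnion_finset (fun i _ j _ hij => hdisj hij) (fun i _ => hmeas i),
          ENNReal.toReal_sum (fun i _ => measure_ne_top ν (f i))]
      have hLk : Tendsto (fun k => (ν (Wk k)).toReal) atTop (𝓝 ((ν (⋃ i, f i)).toReal)) := by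
        have h := hhs.tendsto_sum_nat
        exact h.congr fun k => (hWk_meas k).symm
      have hδ0 : ∀ k, (0:ℝ) ≤ (ν (⋃ i, f i)).toReal - (ν (Wk k)).toReal := fun k =>
        sub_nonneg.mpr (ENNReal.toReal_mono (measure_ne_top ν _) (measure_mono (hWksub k)))
      have hCk : ∀ k, Tendsto (cavg fun n => (ν (S^[n] ⁻¹' (Wk k) ∩ C ×ˢ D)).toReal) atTop
          (𝓝 ((ν (Wk k)).toReal * (ν (C ×ˢ D)).toReal)) := by
        intro k
        induction k with
        | zero =>
          have h0 : Wk 0 = ∅ := by simp [hWkdef]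
          rw [h0]
          simp only [Set.preimage_empty, Set.empty_inter, measure_empty, ENNReal.toReal_zero,
            zero_mul]
          exact tendsto_cavg_const 0
        | succ k ihk =>
          have hWksucc : Wk (k + 1) = Wk k ∪ f k := by
            rw [hWkdef]
            simp only [Finset.range_add_one, Finset.set_biUnion_insert]
            exact Set.union_comm _ _
          have hdk : Disjoint (Wk k) (f k) := by
            rw [Set.disjoint_left]
            intro x hx hxf
            simp only [hWkdef, Set.mem_iUnion, Finset.mem_range, exists_prop] at hx
            obtain ⟨i, hi, hxi⟩ := hx
            exact Set.disjoint_left.mp (hdisj (Nat.ne_of_lt hi)) hxi hxf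
          have hterm : ∀ n : ℕ, (ν (S^[n] ⁻¹' (Wk (k + 1)) ∩ C ×ˢ D)).toReal
              = (ν (S^[n] ⁻¹' (Wk k) ∩ C ×ˢ D)).toReal
                + (ν (S^[n] ⁻¹' (f k) ∩ C ×ˢ D)).toReal := by
            intro n
            have hdd : Disjoint (S^[n] ⁻¹' (Wk k) ∩ C ×ˢ D) (S^[n] ⁻¹' (f k) ∩ C ×ˢ D) :=
              ((hdk.preimage _).mono Set.inter_subset_left Set.inter_subset_left)
            rw [hWksucc, Set.preimage_union, Set.union_inter_distrib_right,
              measure_union hdd (((hmeas k).preimage (hS.iterate n).measurable).inter hG),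
              ENNReal.toReal_add (measure_ne_top _ _) (measure_ne_top _ _)]
          have hval : (ν (Wk (k + 1))).toReal = (ν (Wk k)).toReal + (ν (f k)).toReal := by
            rw [hWksucc, measure_union hdk (hmeas k),
              ENNReal.toReal_add (measure_ne_top _ _) (measure_ne_top _ _)]
          have h := ihk.add (ih k)
          have h2 : Tendsto (cavg fun n => (ν (S^[n] ⁻¹' (Wk k) ∩ C ×ˢ D)).toReal
              + (ν (S^[n] ⁻¹' (f k) ∩ C ×ˢ D)).toReal) atTop
              (𝓝 ((ν (Wk k)).toReal * (ν (C ×ˢ D)).toReal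
                + (ν (f k)).toReal * (ν (C ×ˢ D)).toReal)) :=
            h.congr fun N => (cavg_add _ _ N).symm
          have hfun : (fun n : ℕ => (ν (S^[n] ⁻¹' (Wk (k + 1)) ∩ C ×ˢ D)).toReal)
              = fun n => (ν (S^[n] ⁻¹' (Wk k) ∩ C ×ˢ D)).toReal
                + (ν (S^[n] ⁻¹' (f k) ∩ C ×ˢ D)).toReal := funext hterm
          rw [hfun, hval, add_mul]
          exact h2
      refine tendsto_of_approx
        (gk := fun k => cavg fun n => (ν (S^[n] ⁻¹' (Wk k) ∩ C ×ˢ D)).toReal)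
        (Lk := fun k => (ν (Wk k)).toReal * (ν (C ×ˢ D)).toReal)
        (δ := fun k => (ν (⋃ i, f i)).toReal - (ν (Wk k)).toReal)
        ?_ hCk ?_ (hLk.mul_const _)
      · intro k N
        have hptw : ∀ n : ℕ, |(ν (S^[n] ⁻¹' (⋃ i, f i) ∩ C ×ˢ D)).toReal
            - (ν (S^[n] ⁻¹' (Wk k) ∩ C ×ˢ D)).toReal|
            ≤ (ν (⋃ i, f i)).toReal - (ν (Wk k)).toReal := by
          intro n
          have hmono : ν (S^[n] ⁻¹' (Wk k) ∩ C ×ˢ D) ≤ ν (S^[n] ⁻¹' (⋃ i, f i) ∩ C ×ˢ D) :=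
            measure_mono (Set.inter_subset_inter_left _ (Set.preimage_mono (hWksub k)))
          have hdiff : (ν ((⋃ i, f i) \ Wk k)).toReal
              = (ν (⋃ i, f i)).toReal - (ν (Wk k)).toReal := by
            rw [measure_diff (hWksub k) (hWkm k).nullMeasurableSet (measure_ne_top ν _),
              ENNReal.toReal_sub_of_le (measure_mono (hWksub k)) (measure_ne_top ν _)]
          have hup : ν (S^[n] ⁻¹' (⋃ i, f i) ∩ C ×ˢ D)
              ≤ ν (S^[n] ⁻¹' (Wk k) ∩ C ×ˢ D) + ν ((⋃ i, f i) \ Wk k) := by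
            have hsub2 : S^[n] ⁻¹' (⋃ i, f i) ∩ C ×ˢ D
                ⊆ (S^[n] ⁻¹' (Wk k) ∩ C ×ˢ D) ∪ S^[n] ⁻¹' ((⋃ i, f i) \ Wk k) := by
              intro p hp
              by_cases h : p ∈ S^[n] ⁻¹' (Wk k)
              · exact Or.inl ⟨h, hp.2⟩
              · exact Or.inr ⟨hp.1, h⟩
            calc ν (S^[n] ⁻¹' (⋃ i, f i) ∩ C ×ˢ D)
                ≤ ν ((S^[n] ⁻¹' (Wk k) ∩ C ×ˢ D) ∪ S^[n] ⁻¹' ((⋃ i, f i) \ Wk k)) :=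
                  measure_mono hsub2
              _ ≤ ν (S^[n] ⁻¹' (Wk k) ∩ C ×ˢ D) + ν (S^[n] ⁻¹' ((⋃ i, f i) \ Wk k)) :=
                  measure_union_le _ _
              _ = ν (S^[n] ⁻¹' (Wk k) ∩ C ×ˢ D) + ν ((⋃ i, f i) \ Wk k) := by
                  rw [(hS.iterate n).measure_preimage (hWm.diff (hWkm k)).nullMeasurableSet]
          have t1 : (ν (S^[n] ⁻¹' (Wk k) ∩ C ×ˢ D)).toReal
              ≤ (ν (S^[n] ⁻¹' (⋃ i, f i) ∩ C ×ˢ D)).toReal :=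
            ENNReal.toReal_mono (measure_ne_top _ _) hmono
          have t2 : (ν (S^[n] ⁻¹' (⋃ i, f i) ∩ C ×ˢ D)).toReal
              ≤ (ν (S^[n] ⁻¹' (Wk k) ∩ C ×ˢ D)).toReal + (ν ((⋃ i, f i) \ Wk k)).toReal := by
            have h := ENNReal.toReal_mono
              (ENNReal.add_ne_top.mpr ⟨measure_ne_top _ _, measure_ne_top _ _⟩) hup
            rwa [ENNReal.toReal_add (measure_ne_top _ _) (measure_ne_top _ _)] at h
          rw [abs_le]
          constructor
          · linarith [hδ0 k]
          · linarith [hdiff, t2]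
        calc |cavg (fun n => (ν (S^[n] ⁻¹' (⋃ i, f i) ∩ C ×ˢ D)).toReal) N
            - cavg (fun n => (ν (S^[n] ⁻¹' (Wk k) ∩ C ×ˢ D)).toReal) N|
            = |cavg (fun n => (ν (S^[n] ⁻¹' (⋃ i, f i) ∩ C ×ˢ D)).toReal
              - (ν (S^[n] ⁻¹' (Wk k) ∩ C ×ˢ D)).toReal) N| := by rw [cavg_sub]
          _ ≤ cavg (fun _ => (ν (⋃ i, f i)).toReal - (ν (Wk k)).toReal) N :=
              abs_cavg_le hptw N
          _ ≤ (ν (⋃ i, f i)).toReal - (ν (Wk k)).toReal := cavg_const_le (hδ0 k) N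
      · have h := (tendsto_const_nhds (x := (ν (⋃ i, f i)).toReal)).sub hLk
        simpa using h
  -- conclude ergodicity of S
  refine ⟨hS, ⟨fun E hE hSE => ?_⟩⟩
  apply aeconst_of_prob hE
  have hSnE : ∀ n : ℕ, S^[n] ⁻¹' E = E := fun n => by
    rw [Set.preimage_iterate_eq]
    exact Function.iterate_fixed hSE n
  have hkey : ∀ C D : Set X, MeasurableSet C → MeasurableSet D →
      ν (E ∩ C ×ˢ D) = ν E * ν (C ×ˢ D) := by
    intro C D hC hD
    have h1 := hdyn C D hC hD hE
    have hfun : (fun n : ℕ => (ν (S^[n] ⁻¹' E ∩ C ×ˢ D)).toReal)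
        = fun _ => (ν (E ∩ C ×ˢ D)).toReal := funext fun n => by rw [hSnE n]
    rw [hfun] at h1
    have h3 := tendsto_nhds_unique (tendsto_cavg_const _) h1
    apply (ENNReal.toReal_eq_toReal_iff' (measure_ne_top ν _)
      (ENNReal.mul_ne_top (measure_ne_top ν _) (measure_ne_top ν _))).mp
    rw [ENNReal.toReal_mul]
    exact h3
  have hExt : ν.restrict E = ν E • ν := by
    refine ext_of_generate_finite _ generateFrom_prod.symm isPiSystem_prod ?_ ?_
    · rintro s ⟨C, hC, D, hD, rfl⟩
      rw [Measure.restrict_apply (hC.prod hD), Measure.smul_apply, smul_eq_mul, Set.inter_comm]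
      exact hkey C D hC hD
    · rw [Measure.restrict_apply_univ, Measure.smul_apply, smul_eq_mul, measure_univ, mul_one]
  have hEE : ν E = ν E * ν E := by
    have h := congrArg (fun m : Measure (X × X) => m E) hExt
    simpa [Measure.restrict_apply hE, Set.inter_self] using h
  by_cases h0 : ν E = 0
  · exact Or.inl h0
  · right
    have h' : ν E * 1 = ν E * ν E := by rw [mul_one]; exact hEE
    exact ((ENNReal.mul_right_inj h0 (measure_ne_top ν E)).mp h').symm
end

section
/- Let H be a Hilbert space, U : H → H a linear isometry, and f ∈ H such that the closure of the orbit {U^i f : i ∈ ℕ} is compact in H. Then for every ε > 0 there exists a natural number L ≥ 1 such that for every n ∈ ℕ there is some i with n + 1 ≤ i ≤ n + L and ‖U^i f − f‖ < ε. -/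
open Filter

private lemma iter_isom {𝕜 H : Type*} [RCLike 𝕜] [NormedAddCommGroup H]
    [InnerProductSpace 𝕜 H] (U : H →ₗᵢ[𝕜] H) :
    ∀ (a : ℕ) (x y : H), ‖(⇑U)^[a] x - (⇑U)^[a] y‖ = ‖x - y‖ := by
  intro a
  induction a with
  | zero => simp
  | succ a ih =>
    intro x y
    rw [Function.iterate_succ_apply, Function.iterate_succ_apply, ih (U x) (U y),
      ← map_sub, U.norm_map]

/-- If `U` is a linear isometry of a Hilbert space `H` and the orbit closure
`cl {Uⁱ f : i ∈ ℕ}` is compact, then the times `i` with `‖Uⁱ f - f‖ < ε`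
are syndetic: for every `ε > 0` there is `L ≥ 1` such that every window
`{n+1, …, n+L}` contains such an `i`. -/
theorem almostPeriodic_syndetic_return
    {𝕜 H : Type*} [RCLike 𝕜] [NormedAddCommGroup H] [InnerProductSpace 𝕜 H]
    [CompleteSpace H] (U : H →ₗᵢ[𝕜] H) (f : H)
    (hcpt : IsCompact (closure (Set.range fun i : ℕ => (⇑U)^[i] f))) :
    ∀ ε > 0, ∃ L : ℕ, 1 ≤ L ∧ ∀ n : ℕ, ∃ i : ℕ,
      n + 1 ≤ i ∧ i ≤ n + L ∧ ‖(⇑U)^[i] f - f‖ < ε := by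
  intro ε hε
  set g : ℕ → H := fun i => (⇑U)^[i] f with hg
  have htb : TotallyBounded (Set.range g) :=
    hcpt.totallyBounded.subset subset_closure
  obtain ⟨t, hts, htf, hcov⟩ :=
    totallyBounded_iff_subset.mp htb _ (Metric.dist_mem_uniformity hε)
  classical
  -- index of each net point
  have hidx : ∀ y ∈ t, ∃ a : ℕ, g a = y := fun y hy => hts hy
  choose! idx hidxspec using hidx
  set M : ℕ := htf.toFinset.sup idx with hM
  refine ⟨M + 1, le_add_self, fun n => ?_⟩
  have hmem : g (n + (M + 1)) ∈ ⋃ y ∈ t, {x | (x, y) ∈ {p : H × H | dist p.1 p.2 < ε}} :=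
    hcov (Set.mem_range_self _)
  simp only [Set.mem_iUnion, Set.mem_setOf_eq] at hmem
  obtain ⟨y, hyt, hdy⟩ := hmem
  have ha : g (idx y) = y := hidxspec y hyt
  have haM : idx y ≤ M := Finset.le_sup (htf.mem_toFinset.mpr hyt)
  set a := idx y
  refine ⟨n + (M + 1) - a, ?_, ?_, ?_⟩
  · omega
  · omega
  · have hsum : a + (n + (M + 1) - a) = n + (M + 1) := by omega
    have key : ∀ i : ℕ, ‖g i - f‖ = ‖g (a + i) - g a‖ := by
      intro i
      rw [hg]
      simp only [Function.iterate_add_apply]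
      rw [iter_isom U a]
    have : ‖g (n + (M + 1) - a) - f‖ = ‖g (n + (M + 1)) - g a‖ := by
      rw [key, hsum]
    calc ‖(⇑U)^[n + (M + 1) - a] f - f‖ = ‖g (n + (M + 1)) - g a‖ := this
      _ < ε := by rw [ha]; simpa [dist_eq_norm] using hdy
end
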